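/- Let L be a complete lattice which is finitely join-irreducible and which is transversally bounded but not uniformly transversally bounded. Then there exists a p-point ultrafilter U on omega together with an injective map phi from L(U) to L preserving arbitrary joins (so the image of phi is a complete upper subsemilattice of L isomorphic to L(U)). -/

import Mathlib

universe u v w

/-- An ultrafilter `U` on `ℕ` is a *p-point* if it is nonprincipal (contains no finite set)
and, whenever `ℕ` is partitioned into pairwise disjoint sets `N k` none of which belongs
to `U`, there is a set `Y ∈ U` such that `Y ∩ N k` is finite for every `k`. -/
def IsPPoint (U : Ultrafilter ℕ) : Prop :=
  (∀ Y : Set ℕ, Y.Finite → Y ∉ U) ∧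
    ∀ N : ℕ → Set ℕ, Pairwise (fun k l => Disjoint (N k) (N l)) →
      (⋃ k, N k) = Set.univ → (∀ k, N k ∉ U) →
        ∃ Y ∈ U, ∀ k, (Y ∩ N k).Finite

/-- A complete lattice `L` is *transversally bounded* if for every family `(X i)_{i : I}`
of nonempty subsets of `L`, all of whose transversals are bounded (i.e. have join strictly
below the top element), the join of `X i` is strictly below the top element for all but
finitely many `i`. -/
def LatticeTB (L : Type u) [CompleteLattice L] : Prop :=
  ∀ (I : Type v) (X : I → Set L), (∀ i, (X i).Nonempty) →
    (∀ x : I → L, (∀ i, x i ∈ X i) → (⨆ i, x i) < ⊤) →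
      {i : I | ¬ sSup (X i) < ⊤}.Finite

/-- A complete lattice `L` is *uniformly transversally bounded* if for every family
`(X i)_{i : I}` of nonempty subsets of `L`, all of whose transversals are bounded, there
is a cofinite subset `J` of `I` such that the join of `⋃ i ∈ J, X i` is strictly below
the top element. -/
def LatticeUTB (L : Type u) [CompleteLattice L] : Prop :=
  ∀ (I : Type v) (X : I → Set L), (∀ i, (X i).Nonempty) →
    (∀ x : I → L, (∀ i, x i ∈ X i) → (⨆ i, x i) < ⊤) →
      ∃ J : Set I, Jᶜ.Finite ∧ sSup (⋃ i ∈ J, X i) < ⊤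

/-- For a (nonprincipal) ultrafilter `U` on `ℕ`, the lattice `L(U)` consists of the
subsets of `ℕ` not belonging to `U`, together with `ℕ` itself, ordered by inclusion. -/
abbrev LU (U : Ultrafilter ℕ) : Type :=
  {A : Set ℕ // A ∉ U ∨ A = Set.univ}

open scoped Classical in
/-- The join of a family of elements of `L(U)`: it is the union of the family if that
union does not belong to `U`, and the top element `ℕ` otherwise. -/
noncomputable def LU.join (U : Ultrafilter ℕ) (s : Set (LU U)) : LU U :=
  if h : (⋃ a ∈ s, a.1) ∈ U then ⟨Set.univ, Or.inr rfl⟩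
  else ⟨⋃ a ∈ s, a.1, Or.inl h⟩


namespace TBPP

variable {L : Type u} [CompleteLattice L]

/-- join of `b` over a set of naturals -/
def sg (b : ℕ → L) (A : Set ℕ) : L := ⨆ n ∈ A, b n

lemma sg_mono {b : ℕ → L} {A B : Set ℕ} (h : A ⊆ B) : sg b A ≤ sg b B := by
  refine iSup₂_le fun n hn => ?_
  exact le_iSup₂ (f := fun n (_ : n ∈ B) => b n) n (h hn)

lemma sg_union {b : ℕ → L} (A B : Set ℕ) : sg b (A ∪ B) = sg b A ⊔ sg b B :=
  iSup_union

lemma sg_empty {b : ℕ → L} : sg b (∅ : Set ℕ) = ⊥ := by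
  simp [sg]

lemma le_sg {b : ℕ → L} {A : Set ℕ} {n : ℕ} (hn : n ∈ A) : b n ≤ sg b A :=
  le_iSup₂ (f := fun n (_ : n ∈ A) => b n) n hn

lemma sg_le {b : ℕ → L} {A : Set ℕ} {c : L} (h : ∀ n ∈ A, b n ≤ c) : sg b A ≤ c :=
  iSup₂_le h

lemma sg_iUnion {ι : Sort*} {b : ℕ → L} (s : ι → Set ℕ) :
    sg b (⋃ i, s i) = ⨆ i, sg b (s i) := iSup_iUnion s b

lemma sg_singleton {b : ℕ → L} (n : ℕ) : sg b ({n} : Set ℕ) = b n := by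
  simp [sg]

/-- A "good system": a sequence in `L` together with the facts extracted from
transversal boundedness. -/
structure PSys (L : Type u) [CompleteLattice L] where
  b : ℕ → L
  hfji : ∀ x y : L, x < ⊤ → y < ⊤ → x ⊔ y < ⊤
  hb : ∀ n, b n < ⊤
  htop : sg b Set.univ = ⊤
  hdisj : ∀ A B : Set ℕ, Disjoint A B → sg b A = ⊤ → sg b B = ⊤ → False
  hPP : ∀ M : ℕ → Set ℕ, Pairwise (fun k l => Disjoint (M k) (M l)) →
      (⋃ k, M k) = Set.univ → (∀ k, sg b (M k) ≠ ⊤) →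
        ∃ Y : Set ℕ, sg b Y = ⊤ ∧ ∀ k, (Y ∩ M k).Finite

namespace PSys

variable (S : PSys L)

/-- fji in "prime" form -/
lemma prime (S : PSys L) {x y : L} (h : x ⊔ y = ⊤) : x = ⊤ ∨ y = ⊤ := by
  by_contra hc
  push_neg at hc
  have := S.hfji x y (lt_top_iff_ne_top.2 hc.1) (lt_top_iff_ne_top.2 hc.2)
  rw [h] at this
  exact absurd this (lt_irrefl _)

lemma small_union {A B : Set ℕ} (hA : sg S.b A ≠ ⊤) (hB : sg S.b B ≠ ⊤) :
    sg S.b (A ∪ B) ≠ ⊤ := by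
  rw [sg_union]
  intro h
  rcases S.prime h with h | h
  · exact hA h
  · exact hB h

lemma small_mono {A B : Set ℕ} (h : A ⊆ B) (hB : sg S.b B ≠ ⊤) : sg S.b A ≠ ⊤ := by
  intro hA
  exact hB (top_unique (hA ▸ sg_mono h))

lemma small_finite {A : Set ℕ} (hA : A.Finite) : sg S.b A ≠ ⊤ := by
  refine Set.Finite.induction_on A hA ?_ ?_
  · rw [sg_empty]
    intro h
    have h0 : (⊥ : L) = ⊤ := h
    have := S.hb 0
    rw [← h0] at this
    exact absurd (bot_le : (⊥:L) ≤ S.b 0) (not_le_of_gt this)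
  · intro a s _ _ hs
    have : insert a s = ({a} : Set ℕ) ∪ s := by
      ext x; simp [or_comm]
    rw [this]
    refine S.small_union ?_ hs
    rw [sg_singleton]
    exact lt_top_iff_ne_top.1 (S.hb a)

lemma compl_big {A : Set ℕ} (hA : sg S.b A ≠ ⊤) : sg S.b Aᶜ = ⊤ := by
  have : sg S.b (A ∪ Aᶜ) = ⊤ := by rw [Set.union_compl_self]; exact S.htop
  rw [sg_union] at this
  rcases S.prime this with h | h
  · exact absurd h hA
  · exact h

lemma big_compl_small {A : Set ℕ} (hA : sg S.b A = ⊤) : sg S.b Aᶜ ≠ ⊤ := by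
  intro h
  exact S.hdisj A Aᶜ disjoint_compl_right hA h


lemma big_inter (S : PSys L) {A B : Set ℕ} (hA : sg S.b A = ⊤) (hB : sg S.b B = ⊤) :
    sg S.b (A ∩ B) = ⊤ := by
  by_contra h
  have hAB : sg S.b (A \ B) = ⊤ := by
    have h2 : sg S.b ((A ∩ B) ∪ (A \ B)) = ⊤ := by
      rw [Set.inter_union_diff]
      exact hA
    rw [sg_union] at h2
    rcases S.prime h2 with h' | h'
    · exact absurd h' h
    · exact h'
  have hBA : sg S.b (B \ A) = ⊤ := by
    have h2 : sg S.b ((B ∩ A) ∪ (B \ A)) = ⊤ := by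
      rw [Set.inter_union_diff]
      exact hB
    rw [sg_union] at h2
    rcases S.prime h2 with h' | h'
    · rw [Set.inter_comm] at h'
      exact absurd h' h
    · exact h'
  refine S.hdisj (A \ B) (B \ A) ?_ hAB hBA
  rw [Set.disjoint_left]
  intro x hx hx'
  exact hx.2 hx'.1

theorem pedestal (S : PSys L) (AMB : Set ℕ) (hA : sg S.b AMB = ⊤) (c : L) (hc : c < ⊤) :
    ∃ P : Set ℕ, P ⊆ AMB ∧ sg S.b P ≠ ⊤ ∧
      ∀ Q : Set ℕ, Q ⊆ AMB \ P → sg S.b Q ≠ ⊤ → ¬ (sg S.b P ≤ c ⊔ sg S.b Q) := by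
  by_contra hcon
  push_neg at hcon
  have habs : ∀ T : {T : Set ℕ // T ⊆ AMB ∧ sg S.b T ≠ ⊤},
      ∃ Q : Set ℕ, Q ⊆ AMB \ T.1 ∧ sg S.b Q ≠ ⊤ ∧ sg S.b T.1 ≤ c ⊔ sg S.b Q :=
    fun T => hcon T.1 T.2.1 T.2.2
  choose Qf hQ1 hQ2 hQ3 using habs
  have hstep : ∀ (k : ℕ) (T : {T : Set ℕ // T ⊆ AMB ∧ sg S.b T ≠ ⊤}),
      (T.1 ∪ Qf T ∪ (AMB ∩ Set.Iic k)) ⊆ AMB ∧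
        sg S.b (T.1 ∪ Qf T ∪ (AMB ∩ Set.Iic k)) ≠ ⊤ := by
    intro k T
    constructor
    · intro x hx
      rcases hx with (hx | hx) | hx
      · exact T.2.1 hx
      · exact (hQ1 T hx).1
      · exact hx.1
    · exact S.small_union (S.small_union T.2.2 (hQ2 T))
        (S.small_finite ((Set.finite_Iic k).subset Set.inter_subset_right))
  let T : ℕ → {T : Set ℕ // T ⊆ AMB ∧ sg S.b T ≠ ⊤} := fun k =>
    Nat.rec ⟨∅, Set.empty_subset _, S.small_finite Set.finite_empty⟩
      (fun k Tk => ⟨Tk.1 ∪ Qf Tk ∪ (AMB ∩ Set.Iic k), (hstep k Tk).1, (hstep k Tk).2⟩) k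
  set A : ℕ → Set ℕ := fun k => (T k).1 with hAdef
  have hA0 : A 0 = ∅ := rfl
  have hAs : ∀ k, A (k+1) = A k ∪ Qf (T k) ∪ (AMB ∩ Set.Iic k) := fun k => rfl
  set R : ℕ → Set ℕ := fun k => A (k+1) \ A k with hRdef
  have hRQ : ∀ k, Qf (T k) ⊆ R k := by
    intro k x hx
    refine ⟨?_, (hQ1 (T k) hx).2⟩
    rw [hAs k]
    exact Or.inl (Or.inr hx)
  have hmono : ∀ j k, j ≤ k → A j ⊆ A k := by
    intro j k h
    induction h with
    | refl => exact le_refl _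
    | @step m h ih =>
      intro x hx
      rw [hAs m]
      exact Or.inl (Or.inl (ih hx))
  have hRA : ∀ k, R k ⊆ A (k+1) := fun k => Set.diff_subset
  have hRAMB : ∀ k, R k ⊆ AMB := fun k => (hRA k).trans (T (k+1)).2.1
  have hRdisj : ∀ j k, j ≠ k → Disjoint (R j) (R k) := by
    have key : ∀ j k, j < k → Disjoint (R j) (R k) := by
      intro j k hjk
      rw [Set.disjoint_left]
      intro x hxj hxk
      exact hxk.2 (hmono (j+1) k hjk ((hRA j) hxj))
    intro j k hjk
    rcases lt_or_gt_of_ne hjk with h | h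
    · exact key j k h
    · exact (key k j h).symm
  have hchain : ∀ k, sg S.b (A k) ≤ c ⊔ sg S.b (R k) := by
    intro k
    exact (hQ3 (T k)).trans (sup_le_sup_left (sg_mono (hRQ k)) c)
  have hcup : ∀ x ∈ AMB, ∃ k, x ∈ A k := by
    intro x hx
    exact ⟨x+1, by rw [hAs x]; exact Or.inr ⟨hx, Set.mem_Iic.2 (le_refl x)⟩⟩
  have hAR : ∀ k, A k ⊆ ⋃ j, R j := by
    intro k
    induction k with
    | zero => rw [hA0]; exact Set.empty_subset _
    | succ k ih =>
      intro x hx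
      by_cases hxk : x ∈ A k
      · exact ih hxk
      · exact Set.mem_iUnion.2 ⟨k, hx, hxk⟩
  -- the partition
  set M : ℕ → Set ℕ := fun j => Nat.rec AMBᶜ (fun j _ => R j) j with hMdef
  have hM0 : M 0 = AMBᶜ := rfl
  have hMs : ∀ j, M (j+1) = R j := fun j => rfl
  have hMpair : Pairwise (fun k l => Disjoint (M k) (M l)) := by
    intro k l hkl
    match k, l with
    | 0, 0 => exact absurd rfl hkl
    | 0, (l+1) =>
      rw [hM0, hMs l, Set.disjoint_left]
      exact fun x hx hx' => hx (hRAMB l hx')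
    | (k+1), 0 =>
      rw [hM0, hMs k, Set.disjoint_left]
      exact fun x hx hx' => hx' (hRAMB k hx)
    | (k+1), (l+1) =>
      rw [hMs k, hMs l]
      exact hRdisj k l (by omega)
  have hMcover : (⋃ j, M j) = Set.univ := by
    apply Set.eq_univ_of_forall
    intro x
    by_cases hx : x ∈ AMB
    · obtain ⟨k, hk⟩ := hcup x hx
      obtain ⟨j, hj⟩ := Set.mem_iUnion.1 (hAR k hk)
      exact Set.mem_iUnion.2 ⟨j+1, by rw [hMs j]; exact hj⟩
    · exact Set.mem_iUnion.2 ⟨0, hx⟩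
  have hMsmall : ∀ j, sg S.b (M j) ≠ ⊤ := by
    intro j
    match j with
    | 0 => exact S.big_compl_small hA
    | (j+1) =>
      rw [hMs j]
      exact S.small_mono (hRA j) (T (j+1)).2.2
  obtain ⟨Y, hY, hYfin⟩ := S.hPP M hMpair hMcover hMsmall
  set Y' : Set ℕ := Y ∩ AMB with hY'def
  have hY'big : sg S.b Y' = ⊤ := by
    have hsplit : Y = Y' ∪ (Y ∩ AMBᶜ) := by
      rw [← Set.inter_union_distrib_left, Set.union_compl_self, Set.inter_univ]
    have h1 : sg S.b Y = sg S.b Y' ⊔ sg S.b (Y ∩ AMBᶜ) := by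
      conv_lhs => rw [hsplit]
      exact sg_union _ _
    have h2 : sg S.b (Y ∩ AMBᶜ) ≠ ⊤ := S.small_finite (by
      have := hYfin 0
      rw [hM0] at this
      exact this)
    rcases S.prime (h1 ▸ hY) with h | h
    · exact h
    · exact absurd h h2
  set YE : Set ℕ := ⋃ k, (Y' ∩ R (2*k)) with hYEdef
  set YO : Set ℕ := ⋃ k, (Y' ∩ R (2*k+1)) with hYOdef
  have hsplitEO : Y' = YE ∪ YO := by
    apply Set.Subset.antisymm
    · intro x hx
      obtain ⟨j, hj⟩ := Set.mem_iUnion.1 (hAR _ ((hcup x hx.2).choose_spec))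
      rcases Nat.even_or_odd j with ⟨m, hm⟩ | ⟨m, hm⟩
      · exact Or.inl (Set.mem_iUnion.2 ⟨m, hx, by rwa [show 2*m = j by omega]⟩)
      · exact Or.inr (Set.mem_iUnion.2 ⟨m, hx, by rwa [show 2*m+1 = j by omega]⟩)
    · refine Set.union_subset ?_ ?_ <;>
        exact Set.iUnion_subset fun k => Set.inter_subset_left
  have hEO : sg S.b YE ⊔ sg S.b YO = ⊤ := by
    rw [← sg_union]
    rw [← hsplitEO]
    exact hY'big
  have contra : ∀ (par : ℕ → ℕ) (par' : ℕ → ℕ),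
      (∀ k, Y' ∩ R (par k) ⊆ A (par' k)) →
      (∀ j k, par j ≠ par' k) →
      sg S.b (⋃ k, (Y' ∩ R (par k))) = ⊤ → False := by
    intro par par' hsub hne hbig
    set D : Set ℕ := ⋃ k, R (par' k) with hDdef
    have hle : sg S.b (⋃ k, (Y' ∩ R (par k))) ≤ c ⊔ sg S.b D := by
      rw [sg_iUnion]
      refine iSup_le fun k => ?_
      calc sg S.b (Y' ∩ R (par k)) ≤ sg S.b (A (par' k)) := sg_mono (hsub k)
        _ ≤ c ⊔ sg S.b (R (par' k)) := hchain (par' k)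
        _ ≤ c ⊔ sg S.b D := by
            rw [hDdef, sg_iUnion]
            exact sup_le_sup_left (le_iSup (fun j => sg S.b (R (par' j))) k) c
    have htop' : c ⊔ sg S.b D = ⊤ := top_unique (hbig ▸ hle)
    have hD : sg S.b D = ⊤ := by
      rcases S.prime htop' with h | h
      · exact absurd h (lt_top_iff_ne_top.1 hc)
      · exact h
    refine S.hdisj _ _ ?_ hbig hD
    rw [Set.disjoint_left]
    intro x hx hx'
    obtain ⟨j, hj⟩ := Set.mem_iUnion.1 hx
    obtain ⟨k, hk⟩ := Set.mem_iUnion.1 hx'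
    exact Set.disjoint_left.1 (hRdisj _ _ (hne j k)) hj.2 hk
  rcases S.prime hEO with h | h
  · refine contra (fun k => 2*k) (fun k => 2*k+1) ?_ (fun j k => by show 2*j ≠ 2*k+1; omega) h
    intro k
    exact (Set.inter_subset_right.trans (hRA (2*k))).trans (le_refl _)
  · refine contra (fun k => 2*k+1) (fun k => 2*k+2) ?_ (fun j k => by show 2*j+1 ≠ 2*k+2; omega) h
    intro k
    exact (Set.inter_subset_right.trans (hRA (2*k+1))).trans (le_refl _)


/-- The main construction from a good system. -/
theorem main (S : PSys L) : ∃ U : Ultrafilter ℕ, IsPPoint U ∧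
      ∃ φ : LU U → L, Function.Injective φ ∧
        ∀ s : Set (LU U), φ (LU.join U s) = ⨆ a ∈ s, φ a := by
  -- abbreviations
  have hbot : sg S.b (∅ : Set ℕ) ≠ ⊤ := S.small_finite Set.finite_empty
  -- the state type for the block recursion
  let St := {q : Set ℕ × Set ℕ //
      sg S.b q.1ᶜ ≠ ⊤ ∧ q.2 ⊆ q.1 ∧ sg S.b q.2 ≠ ⊤ ∧
      ∀ Q : Set ℕ, Q ⊆ q.1 \ q.2 → sg S.b Q ≠ ⊤ → ¬ (sg S.b q.2 ≤ sg S.b q.1ᶜ ⊔ sg S.b Q)}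
  have hbigof : ∀ (A : Set ℕ), sg S.b Aᶜ ≠ ⊤ → sg S.b A = ⊤ := by
    intro A h
    have := S.compl_big h
    rwa [compl_compl] at this
  have mk : ∀ (A : Set ℕ), sg S.b Aᶜ ≠ ⊤ → {P : Set ℕ // P ⊆ A ∧ sg S.b P ≠ ⊤ ∧
      ∀ Q : Set ℕ, Q ⊆ A \ P → sg S.b Q ≠ ⊤ → ¬ (sg S.b P ≤ sg S.b Aᶜ ⊔ sg S.b Q)} := by
    intro A h
    have hped := S.pedestal A (hbigof A h) (sg S.b Aᶜ) (lt_top_iff_ne_top.2 h)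
    exact ⟨hped.choose, hped.choose_spec⟩
  have hnext : ∀ q : St, sg S.b ((q.1.1 \ (q.1.2 ∪ {sInf (q.1.1 \ q.1.2)}))ᶜ) ≠ ⊤ := by
    intro q
    have : (q.1.1 \ (q.1.2 ∪ {sInf (q.1.1 \ q.1.2)}))ᶜ
        = q.1.1ᶜ ∪ (q.1.2 ∪ {sInf (q.1.1 \ q.1.2)}) := by
      rw [Set.diff_eq, Set.compl_inter, compl_compl]
    rw [this]
    refine S.small_union q.2.1 (S.small_union q.2.2.2.1 ?_)
    exact S.small_finite (Set.finite_singleton _)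
  let next : St → St := fun q =>
    let A' := q.1.1 \ (q.1.2 ∪ {sInf (q.1.1 \ q.1.2)})
    let P' := mk A' (hnext q)
    ⟨(A', P'.1), hnext q, P'.2.1, P'.2.2.1, P'.2.2.2⟩
  have h0 : sg S.b ((Set.univ : Set ℕ))ᶜ ≠ ⊤ := by rw [Set.compl_univ]; exact hbot
  let st0 : St :=
    let P0 := mk Set.univ h0
    ⟨(Set.univ, P0.1), h0, P0.2.1, P0.2.2.1, P0.2.2.2⟩
  let f : ℕ → St := fun k => Nat.rec st0 (fun _ q => next q) k
  set A : ℕ → Set ℕ := fun k => (f k).1.1 with hAdef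
  set P : ℕ → Set ℕ := fun k => (f k).1.2 with hPdef
  set μ : ℕ → ℕ := fun k => sInf (A k \ P k) with hμdef
  set blk : ℕ → Set ℕ := fun k => P k ∪ {μ k} with hblkdef
  have hA0 : A 0 = Set.univ := rfl
  have hAs : ∀ k, A (k+1) = A k \ blk k := fun k => rfl
  have hcs : ∀ k, sg S.b (A k)ᶜ ≠ ⊤ := fun k => (f k).2.1
  have hPsub : ∀ k, P k ⊆ A k := fun k => (f k).2.2.1
  have hPsmall : ∀ k, sg S.b (P k) ≠ ⊤ := fun k => (f k).2.2.2.1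
  have hped : ∀ k, ∀ Q : Set ℕ, Q ⊆ A k \ P k → sg S.b Q ≠ ⊤ →
      ¬ (sg S.b (P k) ≤ sg S.b (A k)ᶜ ⊔ sg S.b Q) := fun k => (f k).2.2.2.2
  have hAbig : ∀ k, sg S.b (A k) = ⊤ := fun k => hbigof _ (hcs k)
  have hμmem : ∀ k, μ k ∈ A k \ P k := by
    intro k
    refine Nat.sInf_mem ?_
    rw [Set.nonempty_iff_ne_empty]
    intro hemp
    have hsub : A k ⊆ P k := by
      intro x hx
      by_contra hxp
      exact absurd hemp (Set.nonempty_iff_ne_empty.1 ⟨x, hx, hxp⟩)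
    exact hPsmall k (top_unique ((hAbig k) ▸ sg_mono hsub))
  have hblksub : ∀ k, blk k ⊆ A k := by
    intro k x hx
    rcases hx with hx | hx
    · exact hPsub k hx
    · rw [Set.mem_singleton_iff] at hx
      exact hx ▸ (hμmem k).1
  have hblksmall : ∀ k, sg S.b (blk k) ≠ ⊤ :=
    fun k => S.small_union (hPsmall k) (S.small_finite (Set.finite_singleton _))
  have hAmono : ∀ j k, j ≤ k → A k ⊆ A j := by
    intro j k h
    induction h with
    | refl => exact le_refl _
    | @step m h ih =>
      refine Set.Subset.trans ?_ ih
      rw [hAs m]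
      exact Set.diff_subset
  have hblkdisj : ∀ j k, j ≠ k → Disjoint (blk j) (blk k) := by
    have key : ∀ j k, j < k → Disjoint (blk j) (blk k) := by
      intro j k hjk
      rw [Set.disjoint_left]
      intro x hxj hxk
      have : x ∈ A (j+1) := hblksub k hxk |> hAmono (j+1) k hjk
      rw [hAs j] at this
      exact this.2 hxj
    intro j k hjk
    rcases lt_or_gt_of_ne hjk with h | h
    · exact key j k h
    · exact (key k j h).symm
  have hcompl_eq : ∀ k, (A k)ᶜ = ⋃ j, ⋃ (_ : j < k), blk j := by
    intro k
    induction k with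
    | zero =>
      rw [hA0, Set.compl_univ]
      ext x
      simp
    | succ k ih =>
      rw [hAs k, Set.diff_eq, Set.compl_inter, compl_compl, ih]
      ext x
      simp only [Set.mem_union, Set.mem_iUnion]
      constructor
      · rintro (⟨j, hj, hx⟩ | hx)
        · exact ⟨j, by omega, hx⟩
        · exact ⟨k, by omega, hx⟩
      · rintro ⟨j, hj, hx⟩
        rcases Nat.lt_succ_iff_lt_or_eq.1 hj with h | rfl
        · exact Or.inl ⟨j, h, hx⟩
        · exact Or.inr hx
  have hcover : (⋃ k, blk k) = Set.univ := by
    apply Set.eq_univ_of_forall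
    intro n
    by_contra hn
    rw [Set.mem_iUnion] at hn
    push_neg at hn
    have hmemA : ∀ k, n ∈ A k := by
      intro k
      induction k with
      | zero => rw [hA0]; trivial
      | succ k ih =>
        rw [hAs k]
        exact ⟨ih, hn k⟩
    have hμle : ∀ k, μ k ≤ n := by
      intro k
      refine Nat.sInf_le ⟨hmemA k, ?_⟩
      intro hnP
      exact hn k (Or.inl hnP)
    have hμinj : Function.Injective μ := by
      intro j k hjk
      by_contra hne
      have : μ j ∈ blk j := Or.inr rfl
      have h2 : μ k ∈ blk k := Or.inr rfl
      rw [← hjk] at h2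
      exact Set.disjoint_left.1 (hblkdisj j k hne) this h2
    have : (Set.range μ).Infinite := Set.infinite_range_of_injective hμinj
    refine this (Set.Finite.subset (Set.finite_Iic n) ?_)
    rintro x ⟨k, rfl⟩
    exact Set.mem_Iic.2 (hμle k)
  -- the block union map
  set Qb : Set ℕ → Set ℕ := fun Sset => ⋃ k ∈ Sset, blk k with hQbdef
  have Qb_mono : ∀ {Sset Tset : Set ℕ}, Sset ⊆ Tset → Qb Sset ⊆ Qb Tset := by
    intro Sset Tset h x hx
    rw [hQbdef] at *
    obtain ⟨k, hk, hxk⟩ := Set.mem_iUnion₂.1 hx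
    exact Set.mem_iUnion₂.2 ⟨k, h hk, hxk⟩
  have Qb_univ : Qb Set.univ = Set.univ := by
    simp only [hQbdef]
    rw [Set.biUnion_univ]
    exact hcover
  have Qb_empty : Qb ∅ = ∅ := by
    rw [hQbdef]; simp
  have Qb_blk_sub : ∀ {k : ℕ} {Sset : Set ℕ}, k ∈ Sset → blk k ⊆ Qb Sset := by
    intro k Sset hk
    exact Set.subset_biUnion_of_mem hk
  have Qb_union : ∀ Sset Tset : Set ℕ, Qb (Sset ∪ Tset) = Qb Sset ∪ Qb Tset := by
    intro Sset Tset
    rw [hQbdef]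
    exact Set.biUnion_union Sset Tset blk
  have Qb_inter : ∀ Sset Tset : Set ℕ, Qb (Sset ∩ Tset) = Qb Sset ∩ Qb Tset := by
    intro Sset Tset
    apply Set.Subset.antisymm
    · intro x hx
      obtain ⟨k, hk, hxk⟩ := Set.mem_iUnion₂.1 hx
      exact ⟨Set.mem_iUnion₂.2 ⟨k, hk.1, hxk⟩, Set.mem_iUnion₂.2 ⟨k, hk.2, hxk⟩⟩
    · rintro x ⟨hx1, hx2⟩
      obtain ⟨k, hk, hxk⟩ := Set.mem_iUnion₂.1 hx1
      obtain ⟨l, hl, hxl⟩ := Set.mem_iUnion₂.1 hx2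
      have : k = l := by
        by_contra hne
        exact Set.disjoint_left.1 (hblkdisj k l hne) hxk hxl
      exact Set.mem_iUnion₂.2 ⟨k, ⟨hk, this ▸ hl⟩, hxk⟩
  have Qb_iUnionT : ∀ {ι : Type} (Aj : ι → Set ℕ), Qb (⋃ i, Aj i) = ⋃ i, Qb (Aj i) := by
    intro ι Aj
    rw [hQbdef]
    exact Set.biUnion_iUnion Aj blk
  have Qb_iUnionP : ∀ {ι : Prop} (Aj : ι → Set ℕ), Qb (⋃ i, Aj i) = ⋃ i, Qb (Aj i) := by
    intro ι Aj
    rw [hQbdef]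
    exact Set.biUnion_iUnion Aj blk
  -- the ultrafilter
  have Funiv : Set.univ ∈ {Sset : Set ℕ | sg S.b (Qb Sset) = ⊤} := by
    rw [Set.mem_setOf_eq, Qb_univ]; exact S.htop
  have Fsup : ∀ {Sset Tset : Set ℕ}, Sset ∈ {Sset : Set ℕ | sg S.b (Qb Sset) = ⊤} →
      Sset ⊆ Tset → Tset ∈ {Sset : Set ℕ | sg S.b (Qb Sset) = ⊤} := by
    intro Sset Tset h hsub
    rw [Set.mem_setOf_eq] at h ⊢
    exact top_unique (h ▸ sg_mono (Qb_mono hsub))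
  have Finter : ∀ {Sset Tset : Set ℕ}, Sset ∈ {Sset : Set ℕ | sg S.b (Qb Sset) = ⊤} →
      Tset ∈ {Sset : Set ℕ | sg S.b (Qb Sset) = ⊤} →
      Sset ∩ Tset ∈ {Sset : Set ℕ | sg S.b (Qb Sset) = ⊤} := by
    intro Sset Tset hS hT
    rw [Set.mem_setOf_eq] at hS hT ⊢
    rw [Qb_inter]
    exact S.big_inter hS hT
  let F : Filter ℕ := ⟨{Sset | sg S.b (Qb Sset) = ⊤}, Funiv, Fsup, Finter⟩
  have hFmem : ∀ Sset : Set ℕ, Sset ∈ F ↔ sg S.b (Qb Sset) = ⊤ := fun _ => Iff.rfl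
  let U : Ultrafilter ℕ := Ultrafilter.ofComplNotMemIff F (by
    intro Sset
    constructor
    · intro h
      rw [hFmem] at h ⊢
      have hu : Qb Sset ∪ Qb Ssetᶜ = Set.univ := by
        rw [← Qb_union, Set.union_compl_self, Qb_univ]
      have : sg S.b (Qb Sset) ⊔ sg S.b (Qb Ssetᶜ) = ⊤ := by
        rw [← sg_union, hu]; exact S.htop
      rcases S.prime this with h' | h'
      · exact h'
      · exact absurd h' h
    · intro h hc
      rw [hFmem] at h hc
      have : Qb Sset ∩ Qb Ssetᶜ = ∅ := by
        rw [← Qb_inter, Set.inter_compl_self, Qb_empty]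
      have h2 := S.big_inter h hc
      rw [this, sg_empty] at h2
      exact hbot (by rw [sg_empty]; exact h2))
  have hUmem : ∀ Sset : Set ℕ, Sset ∈ U ↔ sg S.b (Qb Sset) = ⊤ := fun _ => Iff.rfl
  refine ⟨U, ⟨?_, ?_⟩, ?_⟩
  · -- nonprincipal
    intro Y hY
    rw [hUmem]
    refine Set.Finite.induction_on Y hY ?_ ?_
    · rw [Qb_empty, sg_empty]
      intro h; exact hbot (by rw [sg_empty]; exact h)
    · intro a s _ _ ih
      have : insert a s = ({a} : Set ℕ) ∪ s := by ext x; simp [or_comm]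
      rw [this, Qb_union]
      have h1 : Qb {a} = blk a := by
        rw [hQbdef]; simp
      rw [h1]
      intro h
      rcases S.prime (show sg S.b (blk a) ⊔ sg S.b (Qb s) = ⊤ by rw [← sg_union]; exact h) with h' | h'
      · exact hblksmall a h'
      · exact ih h'
  · -- p-point
    intro N hNdisj hNcover hNsmall
    have hM : ∀ k, sg S.b (Qb (N k)) ≠ ⊤ := by
      intro k
      have := hNsmall k
      rw [hUmem] at this
      exact this
    obtain ⟨Y, hYbig, hYfin⟩ := S.hPP (fun k => Qb (N k)) (by
        intro k l hkl
        rw [Set.disjoint_iff_inter_eq_empty, ← Qb_inter,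
          Set.disjoint_iff_inter_eq_empty.1 (hNdisj hkl), Qb_empty])
      (by show (⋃ k, Qb (N k)) = Set.univ
          rw [← Qb_iUnionT, hNcover, Qb_univ]) hM
    refine ⟨{k | (Y ∩ blk k).Nonempty}, ?_, ?_⟩
    · rw [hUmem]
      have hsub : Y ⊆ Qb {k | (Y ∩ blk k).Nonempty} := by
        intro n hn
        have : n ∈ (⋃ k, blk k) := by rw [hcover]; trivial
        obtain ⟨k, hk⟩ := Set.mem_iUnion.1 this
        exact Qb_blk_sub (⟨n, hn, hk⟩ : (Y ∩ blk k).Nonempty) hk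
      exact top_unique (hYbig ▸ sg_mono hsub)
    · intro j
      classical
      set ψ : ℕ → ℕ := fun k => if h : (Y ∩ blk k).Nonempty then h.choose else 0 with hψdef
      have hψmem : ∀ k, (Y ∩ blk k).Nonempty → ψ k ∈ Y ∩ blk k := by
        intro k hk
        rw [hψdef]
        simp only [dif_pos hk]
        exact hk.choose_spec
      refine Set.Finite.of_finite_image (f := ψ) ?_ ?_
      · refine Set.Finite.subset (hYfin j) ?_
        rintro x ⟨k, ⟨hk1, hk2⟩, rfl⟩
        have := hψmem k hk1
        exact ⟨this.1, Qb_blk_sub hk2 this.2⟩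
      · intro k hk l hl he
        have h1 := hψmem k hk.1
        have h2 := hψmem l hl.1
        by_contra hne
        rw [he] at h1
        exact Set.disjoint_left.1 (hblkdisj k l hne) h1.2 h2.2
  · -- the embedding
    refine ⟨fun a => sg S.b (Qb a.1), ?_, ?_⟩
    · -- injectivity
      have SEP : ∀ (k : ℕ) (Sset : Set ℕ), k ∉ Sset → sg S.b (Qb Sset) ≠ ⊤ →
          ¬ (sg S.b (blk k) ≤ sg S.b (Qb Sset)) := by
        intro k Sset hk hsmall hle
        have hsplit : Sset = {j ∈ Sset | j < k} ∪ {j ∈ Sset | k < j} := by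
          ext j
          simp only [Set.mem_union, Set.mem_setOf_eq]
          constructor
          · intro hj
            have : j ≠ k := fun h => hk (h ▸ hj)
            rcases lt_or_gt_of_ne this with h | h
            · exact Or.inl ⟨hj, h⟩
            · exact Or.inr ⟨hj, h⟩
          · rintro (⟨hj, _⟩ | ⟨hj, _⟩) <;> exact hj
        have hlow : Qb {j ∈ Sset | j < k} ⊆ (A k)ᶜ := by
          rw [hcompl_eq k]
          intro x hx
          obtain ⟨j, hj, hxj⟩ := Set.mem_iUnion₂.1 hx
          exact Set.mem_iUnion.2 ⟨j, Set.mem_iUnion.2 ⟨hj.2, hxj⟩⟩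
        have hhigh : Qb {j ∈ Sset | k < j} ⊆ A k \ P k := by
          intro x hx
          obtain ⟨j, hj, hxj⟩ := Set.mem_iUnion₂.1 hx
          have hxAj : x ∈ A j := hblksub j hxj
          have hxA : x ∈ A (k+1) := hAmono (k+1) j hj.2 hxAj
          rw [hAs k] at hxA
          exact ⟨hxA.1, fun hP => hxA.2 (Or.inl hP)⟩
        have hP_le : sg S.b (P k) ≤ sg S.b (A k)ᶜ ⊔ sg S.b (Qb {j ∈ Sset | k < j}) := by
          have h1 : sg S.b (P k) ≤ sg S.b (Qb Sset) := by
            refine le_trans ?_ hle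
            exact sg_mono (fun x hx => Or.inl hx)
          have h2 : sg S.b (Qb Sset) ≤ sg S.b (A k)ᶜ ⊔ sg S.b (Qb {j ∈ Sset | k < j}) := by
            conv_lhs => rw [hsplit]
            rw [Qb_union, sg_union]
            exact sup_le_sup_right (sg_mono hlow) _
          exact h1.trans h2
        exact hped k (Qb {j ∈ Sset | k < j}) hhigh
          (S.small_mono (Qb_mono (fun j hj => hj.1)) hsmall) hP_le
      have SEP2 : ∀ (Aset A'set : Set ℕ), sg S.b (Qb A'set) ≠ ⊤ →
          (∃ k, k ∈ Aset ∧ k ∉ A'set) → sg S.b (Qb Aset) = sg S.b (Qb A'set) → False := by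
        rintro Aset A'set hsm ⟨k, hk, hk'⟩ heq
        refine SEP k A'set hk' hsm ?_
        rw [← heq]
        exact sg_mono (Qb_blk_sub hk)
      intro a a' heq
      apply Subtype.ext
      by_contra hne
      have hdiff : (∃ k, k ∈ a.1 ∧ k ∉ a'.1) ∨ (∃ k, k ∈ a'.1 ∧ k ∉ a.1) := by
        by_contra hc
        push_neg at hc
        refine hne (Set.Subset.antisymm ?_ ?_)
        · intro k hk
          exact hc.1 k hk
        · intro k hk
          exact hc.2 k hk
      rcases a.2 with ha | ha <;> rcases a'.2 with ha' | ha'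
      · rw [hUmem] at ha ha'
        rcases hdiff with h | h
        · exact SEP2 a.1 a'.1 ha' h heq
        · exact SEP2 a'.1 a.1 ha h heq.symm
      · rw [hUmem] at ha
        have h2 : sg S.b (Qb a'.1) = ⊤ := by rw [ha', Qb_univ]; exact S.htop
        exact ha (heq.trans h2)
      · rw [hUmem] at ha'
        have h2 : sg S.b (Qb a.1) = ⊤ := by rw [ha, Qb_univ]; exact S.htop
        exact ha' (heq.symm.trans h2)
      · exact hne (ha.trans ha'.symm)
    · -- join preservation
      intro s
      have hkey : sg S.b (Qb (⋃ a ∈ s, a.1)) = ⨆ a ∈ s, sg S.b (Qb a.1) := by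
        rw [Qb_iUnionT (fun a => ⋃ (_ : a ∈ s), a.1), sg_iUnion]
        congr 1
        funext a
        rw [Qb_iUnionP (fun _ : a ∈ s => a.1), sg_iUnion]
      by_cases h : (⋃ a ∈ s, a.1) ∈ U
      · have h1 : LU.join U s = ⟨Set.univ, Or.inr rfl⟩ := by
          unfold LU.join
          rw [dif_pos h]
        rw [h1]
        show sg S.b (Qb Set.univ) = ⨆ a ∈ s, sg S.b (Qb a.1)
        have h2 : sg S.b (Qb (⋃ a ∈ s, a.1)) = ⊤ := (hUmem _).1 h
        rw [Qb_univ, S.htop, ← hkey]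
        exact h2.symm
      · have h1 : LU.join U s = ⟨⋃ a ∈ s, a.1, Or.inl h⟩ := by
          unfold LU.join
          rw [dif_neg h]
        rw [h1]
        exact hkey

end PSys

/-- p-point extraction from transversal boundedness, at the level of a sequence. -/
theorem PP_of_TB (htb : LatticeTB.{u, v} L) (b : ℕ → L)
    (hprime : ∀ x y : L, x ⊔ y = ⊤ → x = ⊤ ∨ y = ⊤)
    (hb : ∀ n, b n < ⊤) (htop : sg b Set.univ = ⊤) :
    ∀ M : ℕ → Set ℕ, Pairwise (fun k l => Disjoint (M k) (M l)) →
      (⋃ k, M k) = Set.univ → (∀ k, sg b (M k) ≠ ⊤) →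
        ∃ Y : Set ℕ, sg b Y = ⊤ ∧ ∀ k, (Y ∩ M k).Finite := by
  intro M hMd hMc hMs
  have hsu : ∀ {A B : Set ℕ}, sg b A ≠ ⊤ → sg b B ≠ ⊤ → sg b (A ∪ B) ≠ ⊤ := by
    intro A B hA hB h
    rw [sg_union] at h
    rcases hprime _ _ h with h | h
    · exact hA h
    · exact hB h
  set tl : ℕ → Set ℕ := fun j => ⋃ m, ⋃ (_ : j < m), M m with htl
  have hlow : ∀ j, sg b (⋃ m, ⋃ (_ : m ≤ j), M m) ≠ ⊤ := by
    intro j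
    induction j with
    | zero =>
      have : (⋃ m, ⋃ (_ : m ≤ 0), M m) = M 0 := by
        ext n
        simp only [Set.mem_iUnion, Nat.le_zero]
        constructor
        · rintro ⟨m, rfl, h⟩; exact h
        · intro h; exact ⟨0, rfl, h⟩
      rw [this]; exact hMs 0
    | succ j ih =>
      have : (⋃ m, ⋃ (_ : m ≤ j+1), M m) = (⋃ m, ⋃ (_ : m ≤ j), M m) ∪ M (j+1) := by
        ext n
        simp only [Set.mem_iUnion, Set.mem_union]
        constructor
        · rintro ⟨m, hm, h⟩
          rcases Nat.lt_succ_iff_lt_or_eq.1 (Nat.lt_succ_of_le hm) with h' | rfl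
          · exact Or.inl ⟨m, by omega, h⟩
          · exact Or.inr h
        · rintro (⟨m, hm, h⟩ | h)
          · exact ⟨m, by omega, h⟩
          · exact ⟨j+1, le_refl _, h⟩
      rw [this]
      exact hsu ih (hMs (j+1))
  have htlbig : ∀ j, sg b (tl j) = ⊤ := by
    intro j
    have hcov : Set.univ = (⋃ m, ⋃ (_ : m ≤ j), M m) ∪ tl j := by
      apply Set.Subset.antisymm
      · intro n _
        have : n ∈ ⋃ k, M k := by rw [hMc]; trivial
        obtain ⟨m, hm⟩ := Set.mem_iUnion.1 this
        by_cases h : m ≤ j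
        · exact Or.inl (Set.mem_iUnion.2 ⟨m, Set.mem_iUnion.2 ⟨h, hm⟩⟩)
        · exact Or.inr (Set.mem_iUnion.2 ⟨m, Set.mem_iUnion.2 ⟨by omega, hm⟩⟩)
      · exact fun n _ => trivial
    have h2 : sg b ((⋃ m, ⋃ (_ : m ≤ j), M m) ∪ tl j) = ⊤ := by rw [← hcov]; exact htop
    rw [sg_union] at h2
    rcases hprime _ _ h2 with h | h
    · exact absurd h (hlow j)
    · exact h
  set W : ULift.{v} ℕ → Set L :=
    fun j => {x : L | ∃ F : Finset ℕ, (↑F : Set ℕ) ⊆ tl j.down ∧ x = sg b ↑F} with hWdef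
  have hWne : ∀ j, (W j).Nonempty :=
    fun j => ⟨sg b (↑(∅ : Finset ℕ) : Set ℕ), ⟨∅, by simp, rfl⟩⟩
  have hWsup : ∀ j, sSup (W j) = ⊤ := by
    intro j
    apply top_unique
    rw [← htlbig j.down]
    refine sg_le fun n hn => ?_
    refine le_sSup ?_
    refine ⟨{n}, ?_, ?_⟩
    · intro m hm
      simp only [Finset.coe_singleton, Set.mem_singleton_iff] at hm
      exact hm ▸ hn
    · rw [Finset.coe_singleton, sg_singleton]
  by_cases hbd : ∀ zz : ULift.{v} ℕ → L, (∀ j, zz j ∈ W j) → (⨆ j, zz j) < ⊤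
  · exfalso
    have hfin := htb (ULift.{v} ℕ) W hWne hbd
    have hall : {j : ULift.{v} ℕ | ¬ sSup (W j) < ⊤} = Set.univ := by
      apply Set.eq_univ_of_forall
      intro j
      show ¬ sSup (W j) < ⊤
      rw [hWsup j]
      exact lt_irrefl _
    rw [hall] at hfin
    exact Set.infinite_univ hfin
  · push_neg at hbd
    obtain ⟨zz, hzmem, hztop⟩ := hbd
    have hztop' : (⨆ j, zz j) = ⊤ := by
      have := lt_top_iff_ne_top.not.1 hztop
      rw [not_ne_iff] at this
      exact this
    choose Ff hFf1 hFf2 using hzmem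
    refine ⟨⋃ j, (↑(Ff j) : Set ℕ), ?_, ?_⟩
    · rw [sg_iUnion]
      rw [show (fun j => sg b (↑(Ff j) : Set ℕ)) = zz from funext fun j => (hFf2 j).symm]
      exact hztop'
    · intro k
      refine Set.Finite.subset (Set.Finite.biUnion (Set.finite_Iio k)
        (fun j _ => (Ff (ULift.up j)).finite_toSet)) ?_
      rintro n ⟨hnY, hnM⟩
      obtain ⟨j, hj⟩ := Set.mem_iUnion.1 hnY
      have hn_tl := hFf1 j hj
      obtain ⟨m, hmem⟩ := Set.mem_iUnion.1 hn_tl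
      obtain ⟨hm, hnm⟩ := Set.mem_iUnion.1 hmem
      have hmk : m = k := by
        by_contra hne
        exact Set.disjoint_left.1 (hMd hne) hnm hnM
      refine Set.mem_biUnion (Set.mem_Iio.2 (by omega : j.down < k)) ?_
      rw [show ULift.up j.down = j from rfl]
      exact hj


/-- Constructing a good system from the hypotheses. -/
theorem exists_psys (hfji : ∀ a b : L, a < ⊤ → b < ⊤ → a ⊔ b < ⊤)
    (htb : LatticeTB.{u, v} L) (hnutb : ¬ LatticeUTB.{u, v} L) :
    Nonempty (PSys L) := by
  classical
  have hprime : ∀ x y : L, x ⊔ y = ⊤ → x = ⊤ ∨ y = ⊤ := by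
    intro x y h
    by_contra hc
    push_neg at hc
    exact absurd (h ▸ hfji x y (lt_top_iff_ne_top.2 hc.1) (lt_top_iff_ne_top.2 hc.2))
      (lt_irrefl _)
  unfold LatticeUTB at hnutb
  push_neg at hnutb
  obtain ⟨I, X, h1, h2, h3⟩ := hnutb
  have hbotlt : (⊥ : L) < ⊤ :=
    lt_of_le_of_lt bot_le (h2 (fun i => (h1 i).some) (fun i => (h1 i).some_mem))
  have hbot_ne : (⊥ : L) ≠ ⊤ := fun h => absurd (h ▸ hbotlt) (lt_irrefl _)
  have hB0 : {i : I | ¬ sSup (X i) < ⊤}.Finite := htb I X h1 h2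
  -- restrict to the subtype of small slots
  set I' := {i : I // sSup (X i) < ⊤} with hI'
  set X' : I' → Set L := fun i => X i.1 with hX'
  have h1' : ∀ i : I', (X' i).Nonempty := fun i => h1 i.1
  have h2' : ∀ x : I' → L, (∀ i, x i ∈ X' i) → (⨆ i, x i) < ⊤ := by
    intro x hx
    set xe : I → L := fun i => if h : sSup (X i) < ⊤ then x ⟨i, h⟩ else (h1 i).some with hxe
    have hxe_mem : ∀ i, xe i ∈ X i := by
      intro i
      by_cases h : sSup (X i) < ⊤
      · simp only [hxe, dif_pos h]
        exact hx ⟨i, h⟩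
      · simp only [hxe, dif_neg h]
        exact (h1 i).some_mem
    refine lt_of_le_of_lt (iSup_le fun i => ?_) (h2 xe hxe_mem)
    have : x i = xe i.1 := by simp only [hxe, dif_pos i.2]; rfl
    rw [this]
    exact le_iSup xe i.1
  -- bigness at the I' level
  set bg : Set I' → Prop := fun S => (⨆ i ∈ S, sSup (X' i)) = ⊤ with hbg
  have hbiU' : ∀ (J : Set I'), sSup (⋃ i ∈ J, X' i) = ⨆ i ∈ J, sSup (X' i) := by
    intro J
    apply le_antisymm
    · apply sSup_le
      intro x hx
      obtain ⟨i, hi, hxi⟩ := Set.mem_iUnion₂.1 hx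
      exact le_trans (le_sSup hxi)
        (le_iSup₂ (f := fun i (_ : i ∈ J) => sSup (X' i)) i hi)
    · exact iSup₂_le fun i hi => sSup_le_sSup (Set.subset_biUnion_of_mem hi)
  have hbmono : ∀ {S T : Set I'}, S ⊆ T →
      (⨆ i ∈ S, sSup (X' i)) ≤ ⨆ i ∈ T, sSup (X' i) := by
    intro S T h
    exact iSup₂_le fun i hi =>
      le_iSup₂ (f := fun i (_ : i ∈ T) => sSup (X' i)) i (h hi)
  have h3' : ∀ J' : Set I', J'ᶜ.Finite → bg J' := by
    intro J' hJ'
    set J : Set I := Subtype.val '' J' with hJ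
    have hJc : Jᶜ.Finite := by
      refine Set.Finite.subset (hB0.union (hJ'.image Subtype.val)) ?_
      intro i hi
      by_cases h : sSup (X i) < ⊤
      · right
        refine ⟨⟨i, h⟩, ?_, rfl⟩
        intro hmem
        exact hi ⟨⟨i, h⟩, hmem, rfl⟩
      · left
        exact h
    have hns := h3 J hJc
    have heq : (⋃ i ∈ J, X i) = ⋃ i ∈ J', X' i := by
      ext x
      simp only [Set.mem_iUnion]
      constructor
      · rintro ⟨i, ⟨i', hi', rfl⟩, hx⟩
        exact ⟨i', hi', hx⟩
      · rintro ⟨i', hi', hx⟩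
        exact ⟨i'.1, ⟨i', hi', rfl⟩, hx⟩
    rw [heq] at hns
    have : sSup (⋃ i ∈ J', X' i) = ⊤ := by
      have h4 := lt_top_iff_ne_top.not.1 hns
      rw [not_ne_iff] at h4
      exact h4
    rw [hbiU'] at this
    exact this
  -- no countable family of pairwise disjoint big sets
  have hNoDisj : ∀ D : ℕ → Set I', (∀ k, bg (D k)) →
      (∀ j k, j ≠ k → Disjoint (D j) (D k)) → False := by
    intro D hbig hdisj
    set W : ULift.{v} ℕ → Set L := fun k => ⋃ i ∈ D k.down, X' i with hW
    have hWbig : ∀ k : ULift.{v} ℕ, sSup (W k) = ⊤ := by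
      intro k
      rw [hW]
      rw [hbiU' (D k.down)]
      exact hbig k.down
    have hWne : ∀ k, (W k).Nonempty := by
      intro k
      by_contra hne
      rw [Set.not_nonempty_iff_eq_empty] at hne
      have := hWbig k
      rw [hne, sSup_empty] at this
      exact hbot_ne this
    have hbound : ∀ z : ULift.{v} ℕ → L, (∀ k, z k ∈ W k) → (⨆ k, z k) < ⊤ := by
      intro z hz
      have hch : ∀ k : ULift.{v} ℕ, ∃ i : I', i ∈ D k.down ∧ z k ∈ X' i := by
        intro k
        obtain ⟨i, hi, hzi⟩ := Set.mem_iUnion₂.1 (hz k)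
        exact ⟨i, hi, hzi⟩
      choose iw hiw1 hiw2 using hch
      have hiwinj : ∀ j k, iw j = iw k → j = k := by
        intro j k hjk
        by_contra hne
        have hne' : j.down ≠ k.down := by
          intro h
          exact hne (by cases j; cases k; cases h; rfl)
        have hmem := hiw1 k
        rw [← hjk] at hmem
        exact Set.disjoint_left.1 (hdisj j.down k.down hne') (hiw1 j) hmem
      set xg : I' → L :=
        fun i => if h : ∃ k, iw k = i then z h.choose else (h1' i).some with hxg
      have hxg_mem : ∀ i, xg i ∈ X' i := by
        intro i
        by_cases h : ∃ k, iw k = i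
        · simp only [hxg, dif_pos h]
          have := hiw2 h.choose
          rwa [h.choose_spec] at this
        · simp only [hxg, dif_neg h]
          exact (h1' i).some_mem
      refine lt_of_le_of_lt (iSup_le fun k => ?_) (h2' xg hxg_mem)
      have hex : ∃ k', iw k' = iw k := ⟨k, rfl⟩
      have : xg (iw k) = z k := by
        simp only [hxg, dif_pos hex]
        rw [hiwinj _ _ hex.choose_spec]
      rw [← this]
      exact le_iSup xg (iw k)
    have hfin := htb (ULift.{v} ℕ) W hWne hbound
    have hall : {k : ULift.{v} ℕ | ¬ sSup (W k) < ⊤} = Set.univ := by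
      apply Set.eq_univ_of_forall
      intro k
      show ¬ sSup (W k) < ⊤
      rw [hWbig k]
      exact lt_irrefl _
    rw [hall] at hfin
    exact Set.infinite_univ hfin
  -- a "good" (indecomposable) big set exists
  have hGOOD : ∃ Sstar : Set I', bg Sstar ∧
      ∀ T : Set I', T ⊆ Sstar → bg T → ¬ bg (Sstar \ T) := by
    by_contra hcon
    push_neg at hcon
    have hsplit : ∀ S : {S : Set I' // bg S},
        ∃ T : Set I', T ⊆ S.1 ∧ bg T ∧ bg (S.1 \ T) := by
      intro S
      obtain ⟨T, hT1, hT2, hT3⟩ := hcon S.1 S.2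
      exact ⟨T, hT1, hT2, hT3⟩
    choose Tf hTf1 hTf2 hTf3 using hsplit
    have hbu : bg Set.univ := h3' Set.univ (by simp)
    let g : {S : Set I' // bg S} → {S : Set I' // bg S} := fun S => ⟨S.1 \ Tf S, hTf3 S⟩
    let R : ℕ → {S : Set I' // bg S} := fun k => Nat.rec ⟨Set.univ, hbu⟩ (fun _ S => g S) k
    have hRs : ∀ k, (R (k+1)).1 = (R k).1 \ Tf (R k) := fun k => rfl
    have hRmono : ∀ j k, j ≤ k → (R k).1 ⊆ (R j).1 := by
      intro j k h
      induction h with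
      | refl => exact le_refl _
      | @step m h ih =>
        refine Set.Subset.trans ?_ ih
        rw [hRs m]
        exact Set.diff_subset
    have hDdisj : ∀ j k, j ≠ k → Disjoint (Tf (R j)) (Tf (R k)) := by
      have key : ∀ j k, j < k → Disjoint (Tf (R j)) (Tf (R k)) := by
        intro j k hjk
        rw [Set.disjoint_left]
        intro x hxj hxk
        have hxRk : x ∈ (R k).1 := hTf1 (R k) hxk
        have : x ∈ (R (j+1)).1 := hRmono (j+1) k hjk hxRk
        rw [hRs j] at this
        exact this.2 hxj
      intro j k hjk
      rcases lt_or_gt_of_ne hjk with h | h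
      · exact key j k h
      · exact (key k j h).symm
    exact hNoDisj (fun k => Tf (R k)) (fun k => hTf2 (R k)) hDdisj
  obtain ⟨Sstar, hSbig, hSgood⟩ := hGOOD
  -- extract a countable big subset of Sstar
  have hYtop : sSup (⋃ i ∈ Sstar, X' i) = ⊤ := by rw [hbiU']; exact hSbig
  have hYne : (⋃ i ∈ Sstar, X' i).Nonempty := by
    by_contra h
    rw [Set.not_nonempty_iff_eq_empty] at h
    rw [h, sSup_empty] at hYtop
    exact hbot_ne hYtop
  have hext : ∃ z : ULift.{v} ℕ → L,
      (∀ k, z k ∈ ⋃ i ∈ Sstar, X' i) ∧ ¬ (⨆ k, z k) < ⊤ := by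
    by_contra hb
    push_neg at hb
    have hfin := htb (ULift.{v} ℕ) (fun _ => ⋃ i ∈ Sstar, X' i) (fun _ => hYne) hb
    have hall : {k : ULift.{v} ℕ | ¬ sSup (⋃ i ∈ Sstar, X' i) < ⊤} = Set.univ := by
      apply Set.eq_univ_of_forall
      intro k
      show ¬ sSup (⋃ i ∈ Sstar, X' i) < ⊤
      rw [hYtop]
      exact lt_irrefl _
    rw [hall] at hfin
    exact Set.infinite_univ hfin
  obtain ⟨z, hzmem, hztop⟩ := hext
  have hztop' : (⨆ k, z k) = ⊤ := by
    have := lt_top_iff_ne_top.not.1 hztop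
    rwa [not_ne_iff] at this
  have hch : ∀ k, ∃ i : I', i ∈ Sstar ∧ z k ∈ X' i := by
    intro k
    obtain ⟨i, hi, h⟩ := Set.mem_iUnion₂.1 (hzmem k)
    exact ⟨i, hi, h⟩
  choose iz hiz1 hiz2 using hch
  set T' : Set I' := Set.range iz with hT'
  have hT'sub : T' ⊆ Sstar := by
    rintro _ ⟨k, rfl⟩
    exact hiz1 k
  have hT'big : bg T' := by
    apply top_unique
    rw [← hztop']
    refine iSup_le fun k => ?_
    exact le_trans (le_sSup (hiz2 k))
      (le_iSup₂ (f := fun i (_ : i ∈ T') => sSup (X' i)) (iz k) ⟨k, rfl⟩)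
  have hfinsmall : ∀ S : Set I', S.Finite → ¬ bg S := by
    intro S hS
    refine Set.Finite.induction_on S hS ?_ ?_
    · intro h
      simp only [hbg, Set.mem_empty_iff_false, iSup_false, iSup_bot] at h
      exact hbot_ne h
    · intro a s _ _ ih h
      simp only [hbg] at h
      have hins : insert a s = ({a} : Set I') ∪ s := by
        ext x; simp [or_comm]
      rw [hins, iSup_union] at h
      rcases hprime _ _ h with h' | h'
      · have : (⨆ i ∈ ({a} : Set I'), sSup (X' i)) = sSup (X' a) := by
          simp
        rw [this] at h'
        exact absurd (h' ▸ a.2) (lt_irrefl _)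
      · exact ih (by simp only [hbg]; exact h')
  have hT'inf : T'.Infinite := fun hfin => hfinsmall T' hfin hT'big
  have hT'count : T'.Countable := Set.countable_range iz
  haveI hcnt : Countable ↥T' := hT'count.to_subtype
  haveI hinf : Infinite ↥T' := hT'inf.to_subtype
  obtain ⟨d⟩ := nonempty_denumerable ↥T'
  let e : ℕ ≃ ↥T' := (@Denumerable.eqv ↥T' d).symm
  set b : ℕ → L := fun n => sSup (X' (e n).1) with hbdef
  -- the fields
  have hb : ∀ n, b n < ⊤ := fun n => (e n).1.2
  have hsgT : ∀ A : Set ℕ, sg b A = ⨆ i ∈ (fun n => ((e n : ↥T') : I')) '' A, sSup (X' i) := by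
    intro A
    rw [iSup_image]
    rfl
  have himinj : Function.Injective (fun n => ((e n : ↥T') : I')) := by
    intro n m h
    exact e.injective (Subtype.ext h)
  have himg : (fun n => ((e n : ↥T') : I')) '' Set.univ = T' := by
    apply Set.Subset.antisymm
    · rintro _ ⟨n, _, rfl⟩
      exact (e n).2
    · intro i hi
      exact ⟨e.symm ⟨i, hi⟩, trivial, by simp⟩
  have htop : sg b Set.univ = ⊤ := by
    rw [hsgT, himg]
    exact hT'big
  have hdisjf : ∀ A B : Set ℕ, Disjoint A B → sg b A = ⊤ → sg b B = ⊤ → False := by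
    intro A B hAB hA hB
    have hIA : (⨆ i ∈ (fun n => ((e n : ↥T') : I')) '' A, sSup (X' i)) = ⊤ :=
      (hsgT A).symm.trans hA
    have hIB : (⨆ i ∈ (fun n => ((e n : ↥T') : I')) '' B, sSup (X' i)) = ⊤ :=
      (hsgT B).symm.trans hB
    have hsubA : (fun n => ((e n : ↥T') : I')) '' A ⊆ Sstar := by
      rintro _ ⟨n, _, rfl⟩
      exact hT'sub (e n).2
    have hBsub : (fun n => ((e n : ↥T') : I')) '' B ⊆
        Sstar \ (fun n => ((e n : ↥T') : I')) '' A := by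
      rintro _ ⟨n, hn, rfl⟩
      refine ⟨hT'sub (e n).2, ?_⟩
      rintro ⟨m, hm, hfm⟩
      have hmn : m = n := himinj hfm
      exact Set.disjoint_left.1 hAB (hmn ▸ hm) hn
    refine hSgood ((fun n => ((e n : ↥T') : I')) '' A) hsubA hIA ?_
    apply top_unique
    calc ⊤ = ⨆ i ∈ (fun n => ((e n : ↥T') : I')) '' B, sSup (X' i) := hIB.symm
    _ ≤ _ := hbmono hBsub
  exact ⟨⟨b, hfji, hb, htop, hdisjf, PP_of_TB htb b hprime hb htop⟩⟩

end TBPP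

/-- Let `L` be a complete lattice which is finitely join-irreducible (the top element is
not the join of two strictly smaller elements) and which is transversally bounded but not
uniformly transversally bounded.  Then there is a p-point ultrafilter `U` on `ℕ` together
with an injective map `φ : L(U) → L` preserving arbitrary joins, so that the image of `φ`
is a complete upper subsemilattice of `L` isomorphic to `L(U)`. -/
theorem exists_pPoint_and_LU_embedding_of_TB_not_UTB
    (L : Type u) [CompleteLattice L]
    (hfji : ∀ a b : L, a < ⊤ → b < ⊤ → a ⊔ b < ⊤)
    (htb : LatticeTB.{u, v} L) (hnutb : ¬ LatticeUTB.{u, v} L) :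
    ∃ U : Ultrafilter ℕ, IsPPoint U ∧
      ∃ φ : LU U → L, Function.Injective φ ∧
        ∀ s : Set (LU U), φ (LU.join U s) = ⨆ a ∈ s, φ a := by
  obtain ⟨S⟩ := TBPP.exists_psys hfji htb hnutb
  exact S.main
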